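/- arXiv:2111.13415 — 2 statements merged into one kernel-verified Lean document; each statement's English description precedes it below -/
import Mathlib

section
/- Let f : ℝ → ℝ be continuous, T_min < T_max, ε > 0, L > 0, and let K : ℝ≥0 → ℝ≥0 be a strictly increasing continuous bijection onto its range with K(0) = 0, with pseudometric q(d,d') = K(|d−d'|). Define the reachability operator R_ε(S) = S ∪ { d : ∃ d' ∈ S, f(d') − L·q(d,d') − ε ≥ T_min and f(d') + L·q(d,d') + ε ≤ T_max }. Suppose d, d* ∈ ℝ with a safe path between them: η := min over the closed interval between d and d* of min(T_max − ε − f, f − T_min − ε) > 0. Then there exists m ∈ ℕ such that d* ∈ R_ε^m({d}), where R_ε^m denotes the m-fold iterate; moreover m can be taken as the least integer with m·K⁻¹(η/L) ≥ |d* − d|. -/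
open Set

/-- The `ε`-reachability operator for a safety interval `[Tmin, Tmax]`,
with pseudometric `q(d,d') = K |d - d'|`. -/
def Reach (f : ℝ → ℝ) (K : ℝ → ℝ) (L Tmin Tmax ε : ℝ) (S : Set ℝ) : Set ℝ :=
  S ∪ {d | ∃ d' ∈ S, Tmin ≤ f d' - L * K |d - d'| - ε ∧
                      f d' + L * K |d - d'| + ε ≤ Tmax}

/-- Lemma 4 (reachability along a safe path): if there is a safe path between
`d` and `d*`, then `d* ∈ R_ε^m({d})` for some finite `m`, which can be taken as
the least integer with `m · K⁻¹(η/L) ≥ |d* − d|`. -/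
theorem stmt_8 (f : ℝ → ℝ) (hf : Continuous f)
    (Tmin Tmax ε L : ℝ) (hT : Tmin < Tmax) (hε : 0 < ε) (hL : 0 < L)
    (K : ℝ → ℝ) (hK0 : K 0 = 0) (hKmono : StrictMonoOn K (Ici 0))
    (hKcont : Continuous K)
    (d dstar : ℝ)
    (η : ℝ)
    (hη_def : η = min (sInf ((fun x => Tmax - ε - f x) '' uIcc d dstar))
                     (sInf ((fun x => f x - Tmin - ε) '' uIcc d dstar)))
    (hη : 0 < η)
    (δ : ℝ) (hδnn : 0 ≤ δ) (hδ : K δ = η / L) :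
    ∃ m : ℕ, dstar ∈ (Reach f K L Tmin Tmax ε)^[m] {d} ∧
      |dstar - d| ≤ (m : ℝ) * δ ∧
      ∀ m' : ℕ, |dstar - d| ≤ (m' : ℝ) * δ → m ≤ m' := by
  have hδpos : 0 < δ := by
    rcases hδnn.lt_or_eq with h | h
    · exact h
    · exfalso
      have : K δ = 0 := by rw [← h, hK0]
      rw [hδ] at this
      have : (0:ℝ) < η / L := div_pos hη hL
      linarith [this]
  set D := |dstar - d| with hDdef
  have hDnn : 0 ≤ D := abs_nonneg _
  -- safety bound on the path
  have hbd1 : BddBelow ((fun x => Tmax - ε - f x) '' uIcc d dstar) :=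
    (isCompact_uIcc.image (by continuity)).bddBelow
  have hbd2 : BddBelow ((fun x => f x - Tmin - ε) '' uIcc d dstar) :=
    (isCompact_uIcc.image (by continuity)).bddBelow
  have hbound : ∀ x ∈ uIcc d dstar, η ≤ Tmax - ε - f x ∧ η ≤ f x - Tmin - ε := by
    intro x hx
    constructor
    · exact le_trans (hη_def ▸ min_le_left _ _) (csInf_le hbd1 ⟨x, hx, rfl⟩)
    · exact le_trans (hη_def ▸ min_le_right _ _) (csInf_le hbd2 ⟨x, hx, rfl⟩)
  set s : ℝ := if d ≤ dstar then 1 else -1 with hsdef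
  have hsD : s * D = dstar - d := by
    by_cases h : d ≤ dstar
    · simp only [hsdef, if_pos h, one_mul, hDdef]
      exact abs_of_nonneg (by linarith)
    · simp only [hsdef, if_neg h, hDdef]
      rw [abs_of_nonpos (by linarith)]; ring
  have hsabs : |s| = 1 := by
    by_cases h : d ≤ dstar <;> simp [hsdef, h]
  set x : ℕ → ℝ := fun k => d + s * min ((k : ℝ) * δ) D with hxdef
  have hx0 : x 0 = d := by simp [hxdef, min_eq_left hDnn]
  have hxmem : ∀ k, x k ∈ uIcc d dstar := by
    intro k
    have ht1 : 0 ≤ min ((k : ℝ) * δ) D :=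
      le_min (by positivity) hDnn
    have ht2 : min ((k : ℝ) * δ) D ≤ D := min_le_right _ _
    rw [mem_uIcc]
    by_cases h : d ≤ dstar
    · left
      have hs1 : s = 1 := by simp [hsdef, h]
      have hdD : d + D = dstar := by
        have := hsD; rw [hs1, one_mul] at this; linarith
      constructor
      · simp only [hxdef, hs1, one_mul]; linarith
      · simp only [hxdef, hs1, one_mul]; linarith
    · right
      have hs1 : s = -1 := by simp [hsdef, h]
      constructor
      · simp only [hxdef, hs1]
        have : d - D = dstar := by
          have := hsD; rw [hs1] at this; linarith
        nlinarith
      · simp only [hxdef, hs1]; nlinarith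
  have hstep : ∀ k : ℕ, |x (k + 1) - x k| ≤ δ := by
    intro k
    have hdiff : x (k + 1) - x k = s * (min (((k : ℝ) + 1) * δ) D - min ((k : ℝ) * δ) D) := by
      simp only [hxdef]; push_cast; ring
    rw [hdiff, abs_mul, hsabs, one_mul]
    have h1 : min ((k : ℝ) * δ) D ≤ min (((k : ℝ) + 1) * δ) D :=
      min_le_min (by nlinarith) le_rfl
    have h2 : min (((k : ℝ) + 1) * δ) D ≤ min ((k : ℝ) * δ) D + δ := by
      have := min_le_min (le_of_eq (by ring : ((k : ℝ) + 1) * δ = (k : ℝ) * δ + δ))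
        (by linarith : D ≤ D + δ)
      calc min (((k : ℝ) + 1) * δ) D ≤ min ((k : ℝ) * δ + δ) (D + δ) := by
            exact min_le_min (le_of_eq (by ring)) (by linarith)
        _ = min ((k : ℝ) * δ) D + δ := by rw [min_add_add_right]
    rw [abs_le]; constructor <;> linarith
  have hiter : ∀ k : ℕ, x k ∈ (Reach f K L Tmin Tmax ε)^[k] {d} := by
    intro k
    induction k with
    | zero => simp [hx0]
    | succ n ih =>
      rw [Function.iterate_succ_apply']
      right
      refine ⟨x n, ih, ?_, ?_⟩
      · have hK : K |x (n + 1) - x n| ≤ K δ :=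
          (hKmono.monotoneOn) (mem_Ici.mpr (abs_nonneg _)) (mem_Ici.mpr hδnn) (hstep n)
        have hLK : L * K |x (n + 1) - x n| ≤ η := by
          have := mul_le_mul_of_nonneg_left hK hL.le
          rw [hδ, mul_div_cancel₀ _ hL.ne'] at this
          exact this
        have := (hbound (x n) (hxmem n)).2
        linarith
      · have hK : K |x (n + 1) - x n| ≤ K δ :=
          (hKmono.monotoneOn) (mem_Ici.mpr (abs_nonneg _)) (mem_Ici.mpr hδnn) (hstep n)
        have hLK : L * K |x (n + 1) - x n| ≤ η := by
          have := mul_le_mul_of_nonneg_left hK hL.le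
          rw [hδ, mul_div_cancel₀ _ hL.ne'] at this
          exact this
        have := (hbound (x n) (hxmem n)).1
        linarith
  refine ⟨⌈D / δ⌉₊, ?_, ?_, ?_⟩
  · have hmD : D ≤ (⌈D / δ⌉₊ : ℝ) * δ := by
      have := Nat.le_ceil (D / δ)
      rw [div_le_iff₀ hδpos] at this
      linarith
    have hxm : x ⌈D / δ⌉₊ = dstar := by
      simp only [hxdef]
      rw [min_eq_right hmD, hsD]; ring
    rw [← hxm]; exact hiter _
  · have := Nat.le_ceil (D / δ)
    rw [div_le_iff₀ hδpos] at this
    linarith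
  · intro m' hm'
    rw [Nat.ceil_le, div_le_iff₀ hδpos]
    exact hm'
end

section
/- Safety by induction (Theorem 1 core step): Suppose the event E holds, i.e., for all n and all doses d, l̄_n(d) ≤ f(d) ≤ ū_n(d), where l̄_n and ū_n are lower/upper confidence bounds, and f is L-Lipschitz w.r.t. q. Define S_n = S_{n-1} ∪ ⋃_{d ∈ S_{n-1}} { d' : l̄_n(d) − L·q(d,d') ≥ T_min and ū_n(d) + L·q(d,d') ≤ T_max }. If T_min ≤ f(d) ≤ T_max for all d ∈ S_0, then for every n, T_min ≤ f(d) ≤ T_max for all d ∈ S_n. -/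
/-- Safety by induction (Theorem 1 core step): under the good event, every
dose in every expanded safe set `Sₙ` satisfies the safety constraints. -/
theorem stmt_10 {D : Type*} (f : D → ℝ) (q : D → D → ℝ) (L Tmin Tmax : ℝ)
    (hL : 0 < L) (hT : Tmin ≤ Tmax)
    (hLip : ∀ d d', |f d - f d'| ≤ L * q d d')
    (lb ub : ℕ → D → ℝ)
    (hE : ∀ n d, lb n d ≤ f d ∧ f d ≤ ub n d)
    (S : ℕ → Set D)
    (hS : ∀ n : ℕ, S (n + 1) = S n ∪
      ⋃ d ∈ S n, {d' | Tmin ≤ lb (n + 1) d - L * q d d' ∧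
                        ub (n + 1) d + L * q d d' ≤ Tmax})
    (hS0 : ∀ d ∈ S 0, Tmin ≤ f d ∧ f d ≤ Tmax) :
    ∀ n : ℕ, ∀ d ∈ S n, Tmin ≤ f d ∧ f d ≤ Tmax := by
  intro n
  induction n with
  | zero => exact hS0
  | succ n ih =>
    intro d' hd'
    rw [hS n] at hd'
    rcases hd' with h | h
    · exact ih d' h
    · simp only [Set.mem_iUnion, Set.mem_setOf_eq] at h
      obtain ⟨d, hdS, h1, h2⟩ := h
      have hlip := abs_le.mp (hLip d d')
      obtain ⟨hl, hu⟩ := hE (n + 1) d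
      constructor
      · linarith [hlip.2]
      · linarith [hlip.1]
end
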